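/- Let r ≥ 2 and let H be an r-uniform hypergraph on n vertices such that every set of r+1 vertices contains at most 2 hyperedges. Then the number of hyperedges of H is at most (n/r²)·C(n, r-1). -/

import Mathlib

open Finset

lemma choose_pred_self (r : ℕ) (h : 1 ≤ r) : r.choose (r-1) = r := by
  obtain ⟨m, rfl⟩ := Nat.exists_eq_add_of_le h
  simpa [Nat.add_comm] using Nat.choose_succ_self_right m

lemma filter_sub_powersetCard {V : Type*} [DecidableEq V] (k : ℕ) (s t : Finset V) :
    ((s.powersetCard k).filter (fun x => x ⊆ t)) = (s ∩ t).powersetCard k := by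
  ext x
  simp [Finset.mem_powersetCard, Finset.subset_inter_iff, and_assoc, and_comm]

lemma key_lemma (V : Type*) [Fintype V] [DecidableEq V] (r : ℕ) (hr : 2 ≤ r)
    (H : Finset (Finset V)) (huniform : ∀ s ∈ H, s.card = r)
    (hspan : ∀ X : Finset V, X.card = r + 1 → (H.filter (fun s => s ⊆ X)).card ≤ 2)
    (A : Finset V) (hA : A ∈ H) :
    ∑ S ∈ A.powersetCard (r-1), (H.filter (fun B => S ⊆ B)).card ≤ Fintype.card V := by
  have hAcard : A.card = r := huniform A hA
  have hrn : r ≤ Fintype.card V := hAcard ▸ Finset.card_le_univ A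
  -- swap the double count
  have swap : ∑ S ∈ A.powersetCard (r-1), (H.filter (fun B => S ⊆ B)).card
      = ∑ B ∈ H, ((A ∩ B).card).choose (r-1) := by
    simp_rw [Finset.card_filter]
    rw [Finset.sum_comm]
    refine Finset.sum_congr rfl fun B _ => ?_
    rw [← Finset.card_filter, filter_sub_powersetCard, Finset.card_powersetCard]
  rw [swap, ← Finset.add_sum_erase _ _ hA]
  have h1 : ((A ∩ A).card).choose (r-1) = r := by
    rw [Finset.inter_self, hAcard, choose_pred_self r (by omega)]
  -- bound the rest by counting
  have h2 : ∑ B ∈ H.erase A, ((A ∩ B).card).choose (r-1)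
      ≤ ((H.erase A).filter (fun B => (A ∩ B).card = r - 1)).card := by
    rw [Finset.card_filter]
    refine Finset.sum_le_sum fun B hB => ?_
    have hBne : B ≠ A := Finset.ne_of_mem_erase hB
    have hBcard : B.card = r := huniform B (Finset.mem_of_mem_erase hB)
    have hle : (A ∩ B).card ≤ r - 1 := by
      by_contra hc
      push_neg at hc
      have hle2 : (A ∩ B).card ≤ A.card := Finset.card_le_card Finset.inter_subset_left
      have hEq : (A ∩ B).card = r := by omega
      have hABeq : A ∩ B = A :=
        Finset.eq_of_subset_of_card_le Finset.inter_subset_left (by omega)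
      have hAB : A ⊆ B := by rw [← hABeq]; exact Finset.inter_subset_right
      exact hBne (Finset.eq_of_subset_of_card_le hAB (by omega)).symm
    rcases eq_or_lt_of_le hle with h | h
    · simp [h]
    · simp [Nat.choose_eq_zero_of_lt h, h.ne]
  have h3 : ((H.erase A).filter (fun B => (A ∩ B).card = r - 1)).card
      ≤ (Aᶜ.powersetCard 1).card := by
    apply Finset.card_le_card_of_injOn (fun B => B \ A)
    · intro B hB
      simp only [Finset.mem_coe, Finset.mem_filter, Finset.mem_erase] at hB
      obtain ⟨⟨hBne, hBH⟩, hcard⟩ := hB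
      have hBcard : B.card = r := huniform B hBH
      simp only [Finset.mem_coe, Finset.mem_powersetCard]
      constructor
      · intro x hx
        simp only [Finset.mem_sdiff] at hx
        simp [hx.2]
      · have := Finset.card_sdiff_add_card_inter B A
        rw [Finset.inter_comm] at this
        omega
    · intro B hB C hC heq
      have heq' : B \ A = C \ A := heq
      by_contra hne
      simp only [Finset.mem_coe, Finset.mem_filter, Finset.mem_erase] at hB hC
      obtain ⟨⟨hBne, hBH⟩, hcard⟩ := hB
      obtain ⟨⟨hCne, hCH⟩, hcard'⟩ := hC
      set X := A ∪ B with hX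
      have hXcard : X.card = r + 1 := by
        have h1 : X.card = A.card + (B \ A).card := by
          rw [hX, ← Finset.union_sdiff_self_eq_union]
          exact Finset.card_union_of_disjoint disjoint_sdiff
        have h2 := Finset.card_sdiff_add_card_inter B A
        rw [Finset.inter_comm] at h2
        have := huniform B hBH
        omega
      have hCX : C ⊆ X := by
        intro x hx
        by_cases hxA : x ∈ A
        · exact Finset.mem_union_left _ hxA
        · have hxC : x ∈ C \ A := Finset.mem_sdiff.2 ⟨hx, hxA⟩
          rw [← heq'] at hxC
          exact Finset.mem_union_right _ (Finset.mem_sdiff.1 hxC).1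
      have hsub : {A, B, C} ⊆ H.filter (fun s => s ⊆ X) := by
        intro D hD
        simp only [Finset.mem_insert, Finset.mem_singleton] at hD
        rcases hD with rfl | rfl | rfl
        · exact Finset.mem_filter.2 ⟨hA, Finset.subset_union_left⟩
        · exact Finset.mem_filter.2 ⟨hBH, Finset.subset_union_right⟩
        · exact Finset.mem_filter.2 ⟨hCH, hCX⟩
      have hc3 : ({A, B, C} : Finset (Finset V)).card = 3 := by
        rw [Finset.card_insert_of_notMem, Finset.card_insert_of_notMem]
        · simp
        · simpa using hne
        · simp only [Finset.mem_insert, Finset.mem_singleton]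
          push_neg
          exact ⟨Ne.symm hBne, Ne.symm hCne⟩
      have := (Finset.card_le_card hsub).trans (hspan X hXcard)
      omega
  rw [Finset.card_powersetCard, Finset.card_compl, hAcard, Nat.choose_one_right] at h3
  omega

theorem stmt13 (V : Type*) [Fintype V] [DecidableEq V] (r : ℕ) (hr : 2 ≤ r)
    (H : Finset (Finset V)) (huniform : ∀ s ∈ H, s.card = r)
    (hspan : ∀ X : Finset V, X.card = r + 1 → (H.filter (fun s => s ⊆ X)).card ≤ 2) :
    (H.card : ℚ) ≤ (Fintype.card V : ℚ) / r ^ 2 * (Fintype.card V).choose (r - 1) := by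
  classical
  set n := Fintype.card V with hn
  set 𝒮 := (Finset.univ : Finset V).powersetCard (r-1) with h𝒮
  set d : Finset V → ℕ := fun S => (H.filter (fun B => S ⊆ B)).card with hd
  have hfilter : ∀ A : Finset V, 𝒮.filter (fun S => S ⊆ A) = A.powersetCard (r-1) := by
    intro A
    rw [h𝒮, filter_sub_powersetCard, Finset.univ_inter]
  have hsum : ∑ S ∈ 𝒮, d S = r * H.card := by
    simp_rw [hd, Finset.card_filter]
    rw [Finset.sum_comm]
    rw [Finset.sum_congr rfl (fun A hA => ?_), Finset.sum_const, smul_eq_mul, mul_comm]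
    rw [← Finset.card_filter, hfilter A, Finset.card_powersetCard, huniform A hA,
      choose_pred_self r (by omega)]
  have hsq : ∑ S ∈ 𝒮, d S * d S ≤ n * H.card := by
    have step : ∀ S ∈ 𝒮, d S * d S = ∑ A ∈ H, if S ⊆ A then d S else 0 := by
      intro S _
      rw [← Finset.sum_filter, Finset.sum_const, smul_eq_mul]
    rw [Finset.sum_congr rfl step, Finset.sum_comm]
    have bound : ∀ A ∈ H, (∑ S ∈ 𝒮, if S ⊆ A then d S else 0) ≤ n := by
      intro A hA
      rw [← Finset.sum_filter, hfilter A]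
      exact key_lemma V r hr H huniform hspan A hA
    calc ∑ A ∈ H, (∑ S ∈ 𝒮, if S ⊆ A then d S else 0) ≤ ∑ _A ∈ H, n :=
          Finset.sum_le_sum bound
      _ = n * H.card := by rw [Finset.sum_const, smul_eq_mul, mul_comm]
  have hcardS : 𝒮.card = n.choose (r-1) := by
    rw [h𝒮, Finset.card_powersetCard, Finset.card_univ]
  have CS := sq_sum_le_card_mul_sum_sq (s := 𝒮) (f := fun S => (d S : ℚ))
  rw [← Nat.cast_sum, hsum, hcardS] at CS
  have hsq' : (∑ S ∈ 𝒮, ((d S : ℚ)) ^ 2) ≤ (n * H.card : ℕ) := by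
    push_cast
    calc ∑ S ∈ 𝒮, ((d S : ℚ)) ^ 2 = ((∑ S ∈ 𝒮, d S * d S : ℕ) : ℚ) := by
          push_cast; exact Finset.sum_congr rfl fun S _ => (sq (d S : ℚ))
      _ ≤ _ := by exact_mod_cast Nat.cast_le.2 hsq
  have key : ((r * H.card : ℕ) : ℚ) ^ 2 ≤ (n.choose (r-1) : ℚ) * (n * H.card : ℕ) :=
    le_trans CS (mul_le_mul_of_nonneg_left hsq' (by positivity))
  -- final arithmetic
  rcases Nat.eq_zero_or_pos H.card with hm | hm
  · rw [hm]; push_cast; positivity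
  · rw [div_mul_eq_mul_div, le_div_iff₀ (by positivity : (0:ℚ) < (r:ℚ)^2)]
    push_cast at key ⊢
    have hmQ : (0:ℚ) < (H.card : ℚ) := by exact_mod_cast hm
    nlinarith [key, hmQ]
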